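/- Let (X,d) be a Λ-ALLC metric space and let Γ ⊆ X be a Jordan curve satisfying the λ-three-point condition (i.e., for distinct x, y ∈ Γ, the component of Γ \ {x,y} of minimal diameter has diameter at most λ·d(x,y)). Then Γ is C-porous in X, where C depends only on Λ and λ. -/

import Mathlib

open Metric

/-- The open annulus `A(a, r, R) = {y : r < d(a,y) < R}`. -/
def metricAnnulus {X : Type*} [MetricSpace X] (a : X) (r R : ℝ) : Set X :=
  {y | r < dist a y ∧ dist a y < R}

/-- `Λ`-ALLC: each pair of distinct points of an annulus `A(a,r,R)` (with `0 ≤ r < R`) lies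
in a continuum contained in `A(a, r/Λ, ΛR)`. -/
def IsALLC (X : Type*) [MetricSpace X] (Λ : ℝ) : Prop :=
  ∀ (a : X) (r R : ℝ), 0 ≤ r → r < R →
    ∀ x ∈ metricAnnulus a r R, ∀ y ∈ metricAnnulus a r R, x ≠ y →
      ∃ E : Set X, IsCompact E ∧ IsConnected E ∧ x ∈ E ∧ y ∈ E ∧
        E ⊆ metricAnnulus a (r / Λ) (Λ * R)

/-- `Γ` is a Jordan curve: the image of an injective continuous map of the circle. -/
def IsJordanCurve {X : Type*} [MetricSpace X] (Γ : Set X) : Prop :=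
  ∃ f : C(Circle, X), Function.Injective f ∧ Set.range f = Γ

/-- The `λ`-three-point condition: for distinct `x, y ∈ Γ`, some connected component of
`Γ \ {x,y}` has diameter at most `λ · d(x,y)` (equivalently, the component of minimal
diameter does). -/
def ThreePointCondition {X : Type*} [MetricSpace X] (Γ : Set X) (lam : ℝ) : Prop :=
  ∀ x ∈ Γ, ∀ y ∈ Γ, x ≠ y → ∃ z ∈ Γ \ {x, y},
    diam (connectedComponentIn (Γ \ {x, y}) z) ≤ lam * dist x y

/-- `Γ` is `C`-porous in `X`. -/
def IsPorous {X : Type*} [MetricSpace X] (Γ : Set X) (C : ℝ) : Prop :=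
  ∀ z ∈ Γ, ∀ r : ℝ, 0 < r → r ≤ diam (Set.univ : Set X) →
    ∃ x : X, ball x (r / C) ⊆ ball z r \ Γ

section QuasicircleAux

open Set

lemma int_mul_two_pi_abs {n : ℤ} {x : ℝ} (h : x = n * (2 * Real.pi))
    (h1 : |x| < 2 * Real.pi) (h2 : x ≠ 0) : False := by
  have hπ := Real.two_pi_pos
  have hn : n ≠ 0 := by rintro rfl; simp at h; exact h2 h
  have hn1 : (1 : ℝ) ≤ |(n : ℝ)| := by exact_mod_cast Int.one_le_abs hn
  rw [h, abs_mul, abs_of_pos hπ] at h1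
  nlinarith

variable {X : Type} [MetricSpace X] {F : ℝ → X}

omit [MetricSpace X] in
lemma param_injOn (hinj : ∀ u v : ℝ, F u = F v ↔ ∃ n : ℤ, u = v + n * (2 * Real.pi))
    {c u v : ℝ} (hu : u ∈ Ico c (c + 2 * Real.pi)) (hv : v ∈ Ico c (c + 2 * Real.pi))
    (hF : F u = F v) : u = v := by
  obtain ⟨n, hn⟩ := (hinj u v).1 hF
  by_contra hne
  refine int_mul_two_pi_abs (n := n) (x := u - v) (by linarith) ?_ (sub_ne_zero.2 hne)
  rw [abs_sub_lt_iff]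
  obtain ⟨hu1, hu2⟩ := hu
  obtain ⟨hv1, hv2⟩ := hv
  constructor <;> linarith

omit [MetricSpace X] in
lemma param_norm (hinj : ∀ u v : ℝ, F u = F v ↔ ∃ n : ℤ, u = v + n * (2 * Real.pi))
    (θ c : ℝ) : ∃ θ' ∈ Ico c (c + 2 * Real.pi), F θ' = F θ := by
  have hπ := Real.two_pi_pos
  set n : ℤ := ⌊(θ - c) / (2 * Real.pi)⌋ with hn
  have h1 : (n : ℝ) * (2 * Real.pi) ≤ θ - c := (le_div_iff₀ hπ).1 (Int.floor_le _)
  have h2 : θ - c < ((n : ℝ) + 1) * (2 * Real.pi) := by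
    rw [← div_lt_iff₀ hπ]
    exact Int.lt_floor_add_one _
  refine ⟨θ - n * (2 * Real.pi), ⟨by linarith, by nlinarith⟩, ?_⟩
  exact (hinj _ _).2 ⟨-n, by push_cast; ring⟩

omit [MetricSpace X] in
lemma param_range_Icc (hinj : ∀ u v : ℝ, F u = F v ↔ ∃ n : ℤ, u = v + n * (2 * Real.pi))
    (c : ℝ) : F '' Icc c (c + 2 * Real.pi) = Set.range F := by
  refine (image_subset_range _ _).antisymm ?_
  rintro x ⟨θ, rfl⟩
  obtain ⟨θ', hθ', heq⟩ := param_norm hinj θ c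
  exact ⟨θ', Ico_subset_Icc_self hθ', heq⟩

omit [MetricSpace X] in
lemma param_periodic (hinj : ∀ u v : ℝ, F u = F v ↔ ∃ n : ℤ, u = v + n * (2 * Real.pi))
    (θ : ℝ) : F (θ + 2 * Real.pi) = F θ :=
  (hinj _ _).2 ⟨1, by push_cast; ring⟩

lemma arcs_of_lt (hFc : Continuous F)
    (hinj : ∀ u v : ℝ, F u = F v ↔ ∃ n : ℤ, u = v + n * (2 * Real.pi))
    {c d : ℝ} (h1 : c < d) (h2 : d < c + 2 * Real.pi) :
    IsConnected (F '' Ioo c d) ∧ IsConnected (F '' Ioo d (c + 2 * Real.pi)) ∧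
    Disjoint (F '' Ioo c d) (F '' Ioo d (c + 2 * Real.pi)) ∧
    (F '' Ioo c d) ∪ (F '' Ioo d (c + 2 * Real.pi)) = Set.range F \ {F c, F d} ∧
    closure (F '' Ioo c d) ⊆ (F '' Ioo c d) ∪ {F c, F d} ∧
    closure (F '' Ioo d (c + 2 * Real.pi)) ⊆ (F '' Ioo d (c + 2 * Real.pi)) ∪ {F c, F d} ∧
    F c ∈ closure (F '' Ioo c d) ∧ F d ∈ closure (F '' Ioo c d) ∧
    F c ∈ closure (F '' Ioo d (c + 2 * Real.pi)) ∧ F d ∈ closure (F '' Ioo d (c + 2 * Real.pi)) := by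
  have hπ := Real.two_pi_pos
  have hcIco : c ∈ Ico c (c + 2 * Real.pi) := ⟨le_rfl, by linarith⟩
  have hdIco : d ∈ Ico c (c + 2 * Real.pi) := ⟨h1.le, h2⟩
  have hUsub : Ioo c d ⊆ Ico c (c + 2 * Real.pi) := fun θ hθ => ⟨hθ.1.le, by linarith [hθ.2]⟩
  have hVsub : Ioo d (c + 2 * Real.pi) ⊆ Ico c (c + 2 * Real.pi) :=
    fun θ hθ => ⟨by linarith [hθ.1], hθ.2⟩
  -- connectedness
  have hUconn : IsConnected (F '' Ioo c d) :=
    (isConnected_Ioo h1).image F hFc.continuousOn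
  have hVconn : IsConnected (F '' Ioo d (c + 2 * Real.pi)) :=
    (isConnected_Ioo h2).image F hFc.continuousOn
  -- disjoint
  have hdisj : Disjoint (F '' Ioo c d) (F '' Ioo d (c + 2 * Real.pi)) := by
    rw [Set.disjoint_left]
    rintro x ⟨θ₁, hθ₁, rfl⟩ ⟨θ₂, hθ₂, hEq⟩
    have := param_injOn hinj (hVsub hθ₂) (hUsub hθ₁) hEq
    subst this
    exact absurd hθ₁.2 (not_lt.2 hθ₂.1.le)
  -- union
  have hunion : (F '' Ioo c d) ∪ (F '' Ioo d (c + 2 * Real.pi)) = Set.range F \ {F c, F d} := by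
    ext x
    constructor
    · rintro (⟨θ, hθ, rfl⟩ | ⟨θ, hθ, rfl⟩) <;>
      · refine ⟨mem_range_self _, ?_⟩
        simp only [mem_insert_iff, mem_singleton_iff]
        push_neg
        constructor
        · intro hEq
          have := param_injOn hinj (by first | exact hUsub hθ | exact hVsub hθ) hcIco hEq
          subst this
          rcases hθ with ⟨h', h''⟩ <;> linarith
        · intro hEq
          have := param_injOn hinj (by first | exact hUsub hθ | exact hVsub hθ) hdIco hEq
          subst this
          rcases hθ with ⟨h', h''⟩ <;> linarith
    · rintro ⟨⟨θ₀, rfl⟩, hx⟩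
      simp only [mem_insert_iff, mem_singleton_iff] at hx
      push_neg at hx
      obtain ⟨θ, hθ, heq⟩ := param_norm hinj θ₀ c
      have hθc : θ ≠ c := by rintro rfl; exact hx.1 heq.symm
      have hθd : θ ≠ d := by rintro rfl; exact hx.2 heq.symm
      rcases lt_trichotomy θ d with h | h | h
      · exact Or.inl ⟨θ, ⟨lt_of_le_of_ne hθ.1 (Ne.symm hθc), h⟩, heq⟩
      · exact absurd h hθd
      · exact Or.inr ⟨θ, ⟨h, hθ.2⟩, heq⟩
  -- closure facts
  have hclU : closure (F '' Ioo c d) ⊆ (F '' Ioo c d) ∪ {F c, F d} := by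
    have hK : IsClosed (F '' Icc c d) := (isCompact_Icc.image hFc).isClosed
    refine (hK.closure_subset_iff.2 (image_mono Ioo_subset_Icc_self)).trans ?_
    rintro x ⟨θ, hθ, rfl⟩
    rcases eq_or_lt_of_le hθ.1 with h | h
    · exact Or.inr (by simp [← h])
    rcases eq_or_lt_of_le hθ.2 with h' | h'
    · exact Or.inr (by simp [h'])
    · exact Or.inl ⟨θ, ⟨h, h'⟩, rfl⟩
  have hclV : closure (F '' Ioo d (c + 2 * Real.pi)) ⊆
      (F '' Ioo d (c + 2 * Real.pi)) ∪ {F c, F d} := by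
    have hK : IsClosed (F '' Icc d (c + 2 * Real.pi)) := (isCompact_Icc.image hFc).isClosed
    refine (hK.closure_subset_iff.2 (image_mono Ioo_subset_Icc_self)).trans ?_
    rintro x ⟨θ, hθ, rfl⟩
    rcases eq_or_lt_of_le hθ.1 with h | h
    · exact Or.inr (by simp [← h])
    rcases eq_or_lt_of_le hθ.2 with h' | h'
    · exact Or.inr (by rw [h', param_periodic hinj c]; exact mem_insert _ _)
    · exact Or.inl ⟨θ, ⟨h, h'⟩, rfl⟩
  have hIccU : F '' Icc c d ⊆ closure (F '' Ioo c d) := by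
    rw [← closure_Ioo h1.ne]
    exact image_closure_subset_closure_image hFc
  have hIccV : F '' Icc d (c + 2 * Real.pi) ⊆ closure (F '' Ioo d (c + 2 * Real.pi)) := by
    rw [← closure_Ioo h2.ne]
    exact image_closure_subset_closure_image hFc
  have hcU : F c ∈ closure (F '' Ioo c d) := hIccU ⟨c, ⟨le_rfl, h1.le⟩, rfl⟩
  have hdU : F d ∈ closure (F '' Ioo c d) := hIccU ⟨d, ⟨h1.le, le_rfl⟩, rfl⟩
  have hdV : F d ∈ closure (F '' Ioo d (c + 2 * Real.pi)) := hIccV ⟨d, ⟨le_rfl, h2.le⟩, rfl⟩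
  have hcV : F c ∈ closure (F '' Ioo d (c + 2 * Real.pi)) := by
    have := hIccV ⟨c + 2 * Real.pi, ⟨h2.le, le_rfl⟩, rfl⟩
    rwa [param_periodic hinj c] at this
  exact ⟨hUconn, hVconn, hdisj, hunion, hclU, hclV, hcU, hdU, hcV, hdV⟩

lemma key_arcs (hFc : Continuous F)
    (hinj : ∀ u v : ℝ, F u = F v ↔ ∃ n : ℤ, u = v + n * (2 * Real.pi)) :
    ∀ a ∈ Set.range F, ∀ b ∈ Set.range F, a ≠ b →
      ∃ U V : Set X, IsConnected U ∧ IsConnected V ∧ Disjoint U V ∧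
        U ∪ V = Set.range F \ {a, b} ∧
        closure U ⊆ U ∪ {a, b} ∧ closure V ⊆ V ∪ {a, b} ∧
        a ∈ closure U ∧ b ∈ closure U ∧ a ∈ closure V ∧ b ∈ closure V ∧
        ∀ p ∈ U, ∀ q ∈ V, ∀ S ⊆ Set.range F \ {p, q}, IsPreconnected S →
          a ∈ S → b ∈ S → False := by
  have hπ := Real.two_pi_pos
  rintro a ⟨α₀, rfl⟩ b hb hab
  obtain ⟨b₀, hbr⟩ := hb
  obtain ⟨β, hβIco, hβ⟩ := param_norm hinj b₀ α₀
  rw [hbr] at hβ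
  subst hβ
  set α := α₀ with hα
  have hαβ : α < β := lt_of_le_of_ne hβIco.1 (by rintro rfl; exact hab rfl)
  have hβlt : β < α + 2 * Real.pi := hβIco.2
  obtain ⟨hUconn, hVconn, hdisj, hunion, hclU, hclV, haU, hbU, haV, hbV⟩ :=
    arcs_of_lt hFc hinj hαβ hβlt
  refine ⟨F '' Ioo α β, F '' Ioo β (α + 2 * Real.pi), hUconn, hVconn, hdisj, hunion,
    hclU, hclV, haU, hbU, haV, hbV, ?_⟩
  -- the crossing property
  rintro p ⟨s₁, hs₁, rfl⟩ q ⟨s₂, hs₂, rfl⟩ S hS hSconn haS hbS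
  have hs₁s₂ : s₁ < s₂ := hs₁.2.trans hs₂.1
  have hs₂lt : s₂ < s₁ + 2 * Real.pi := by
    have := hs₂.2; have := hs₁.1; linarith
  obtain ⟨hU'conn, hV'conn, hdisj', hunion', hclU', hclV', hpU', hqU', hpV', hqV'⟩ :=
    arcs_of_lt hFc hinj hs₁s₂ hs₂lt
  set U' := F '' Ioo s₁ s₂ with hU'def
  set V' := F '' Ioo s₂ (s₁ + 2 * Real.pi) with hV'def
  have haP : F α ∉ ({F s₁, F s₂} : Set X) := (hS haS).2
  have hbP : F β ∉ ({F s₁, F s₂} : Set X) := (hS hbS).2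
  have hbU' : F β ∈ U' := ⟨β, ⟨hs₁.2, hs₂.1⟩, rfl⟩
  have haV' : F α ∈ V' := by
    refine ⟨α + 2 * Real.pi, ⟨?_, by linarith [hs₁.1]⟩, param_periodic hinj α⟩
    linarith [hs₂.2]
  have hbnotV' : F β ∉ closure V' := by
    intro h
    rcases hclV' h with h' | h'
    · exact (Set.disjoint_left.1 hdisj') hbU' h'
    · exact hbP h'
  have hanotU' : F α ∉ closure U' := by
    intro h
    rcases hclU' h with h' | h'
    · exact (Set.disjoint_left.1 hdisj') h' haV'
    · exact haP h'
  have hsub : S ⊆ (closure V')ᶜ ∪ (closure U')ᶜ := by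
    intro x hx
    by_contra hcon
    simp only [mem_union, mem_compl_iff, not_or, not_not] at hcon
    have h1 : x ∈ V' ∪ {F s₁, F s₂} := hclV' hcon.1
    have h2 : x ∈ U' ∪ {F s₁, F s₂} := hclU' hcon.2
    have hxpq : x ∉ ({F s₁, F s₂} : Set X) := (hS hx).2
    rcases h1 with h1 | h1; rcases h2 with h2 | h2
    · exact (Set.disjoint_left.1 hdisj') h2 h1
    · exact hxpq h2
    · exact hxpq h1
  obtain ⟨x₀, hx₀S, hx₀1, hx₀2⟩ :=
    hSconn (closure V')ᶜ (closure U')ᶜ isClosed_closure.isOpen_compl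
      isClosed_closure.isOpen_compl hsub ⟨F β, hbS, hbnotV'⟩ ⟨F α, haS, hanotU'⟩
  have : x₀ ∈ U' ∪ V' := by rw [hunion']; exact hS hx₀S
  rcases this with h | h
  · exact hx₀2 (subset_closure h)
  · exact hx₀1 (subset_closure h)

lemma IsJordanCurve.exists_param {Γ : Set X} (h : IsJordanCurve Γ) :
    ∃ F : ℝ → X, Continuous F ∧ Set.range F = Γ ∧
      ∀ u v : ℝ, F u = F v ↔ ∃ n : ℤ, u = v + n * (2 * Real.pi) := by
  obtain ⟨f, hfi, hfr⟩ := h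
  refine ⟨fun θ => f (Circle.exp θ), f.continuous.comp Circle.exp.continuous, ?_, ?_⟩
  · rw [← hfr]
    ext x
    constructor
    · rintro ⟨θ, rfl⟩; exact ⟨_, rfl⟩
    · rintro ⟨c, rfl⟩; exact ⟨Complex.arg c, congrArg f (Circle.exp_arg c)⟩
  · intro u v
    rw [hfi.eq_iff]
    exact Circle.exp_eq_exp

lemma reach_chain {E : Set X} (hE : IsPreconnected E) {x y : X}
    (hx : x ∈ E) (hy : y ∈ E) {δ : ℝ} (hδ : 0 < δ) :
    Relation.ReflTransGen (fun u v => u ∈ E ∧ v ∈ E ∧ dist u v < δ) x y := by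
  by_contra hy'
  set rel := fun u v : X => u ∈ E ∧ v ∈ E ∧ dist u v < δ with hrel
  set R := Relation.ReflTransGen rel with hR
  have h := hE (⋃ v ∈ {v | v ∈ E ∧ R x v}, ball v δ)
    (⋃ v ∈ {v | v ∈ E ∧ ¬ R x v}, ball v δ)
    (isOpen_biUnion fun _ _ => isOpen_ball) (isOpen_biUnion fun _ _ => isOpen_ball)
    ?_ ?_ ?_
  · obtain ⟨e, heE, he1, he2⟩ := h
    simp only [mem_iUnion, exists_prop, mem_setOf_eq] at he1 he2
    obtain ⟨v, ⟨hvE, hvR⟩, hev⟩ := he1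
    obtain ⟨v', ⟨hv'E, hv'R⟩, hev'⟩ := he2
    have heR : R x e := hvR.tail ⟨hvE, heE, by rw [dist_comm]; exact mem_ball.1 hev⟩
    exact hv'R (heR.tail ⟨heE, hv'E, mem_ball.1 hev'⟩)
  · intro e heE
    by_cases hc : R x e
    · exact Or.inl (mem_biUnion (show e ∈ {v | v ∈ E ∧ R x v} from ⟨heE, hc⟩)
        (mem_ball_self hδ))
    · exact Or.inr (mem_biUnion (show e ∈ {v | v ∈ E ∧ ¬ R x v} from ⟨heE, hc⟩)
        (mem_ball_self hδ))
  · exact ⟨x, hx, mem_biUnion (show x ∈ {v | v ∈ E ∧ R x v} from ⟨hx, .refl⟩)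
      (mem_ball_self hδ)⟩
  · exact ⟨y, hy, mem_biUnion (show y ∈ {v | v ∈ E ∧ ¬ R x v} from ⟨hy, hy'⟩)
      (mem_ball_self hδ)⟩

lemma exists_switch {α : Type*} {rel : α → α → Prop} {Q : α → Prop} {x y : α}
    (h : Relation.ReflTransGen rel x y) (hx : Q x) (hy : ¬ Q y) :
    ∃ u v, rel u v ∧ Q u ∧ ¬ Q v := by
  induction h with
  | refl => exact absurd hx hy
  | tail hab hbc ih =>
    rename_i b c
    by_cases hb : Q b
    · exact ⟨b, c, hbc, hb, hy⟩
    · exact ih hb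

lemma exists_dist_eq' {E : Set X} (hE : IsPreconnected E) {z u : X} {c : X}
    (hz : z ∈ E) (hu : u ∈ E) {t : ℝ} (h1 : dist c z ≤ t) (h2 : t ≤ dist c u) :
    ∃ p ∈ E, dist c p = t := by
  have hivt := hE.intermediate_value hz hu
    (f := fun x => dist c x) (Continuous.continuousOn (continuous_const.dist continuous_id))
  obtain ⟨p, hp, hpt⟩ := hivt ⟨h1, h2⟩
  exact ⟨p, hp, hpt⟩

lemma exists_third {α : Type*} {a b c : α} (hab : a ≠ b) (hac : a ≠ c) (hbc : b ≠ c)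
    (z u : α) : ∃ d, (d = a ∨ d = b ∨ d = c) ∧ d ≠ z ∧ d ≠ u := by
  by_cases h1 : a ≠ z ∧ a ≠ u
  · exact ⟨a, Or.inl rfl, h1⟩
  by_cases h2 : b ≠ z ∧ b ≠ u
  · exact ⟨b, Or.inr (Or.inl rfl), h2⟩
  by_cases h3 : c ≠ z ∧ c ≠ u
  · exact ⟨c, Or.inr (Or.inr rfl), h3⟩
  exfalso
  have h1' : a = z ∨ a = u := by
    by_cases h : a = z
    · exact Or.inl h
    · push_neg at h1; exact Or.inr (h1 h)
  have h2' : b = z ∨ b = u := by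
    by_cases h : b = z
    · exact Or.inl h
    · push_neg at h2; exact Or.inr (h2 h)
  have h3' : c = z ∨ c = u := by
    by_cases h : c = z
    · exact Or.inl h
    · push_neg at h3; exact Or.inr (h3 h)
  rcases h1' with h1' | h1' <;> rcases h2' with h2' | h2' <;> rcases h3' with h3' | h3' <;>
    first
    | exact hab (h1'.trans h2'.symm)
    | exact hac (h1'.trans h3'.symm)
    | exact hbc (h2'.trans h3'.symm)

end QuasicircleAux

set_option maxHeartbeats 2000000 in
/-- In a `Λ`-ALLC metric space, a quasicircle (a Jordan curve satisfying the `λ`-three-point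
condition) is `C`-porous, with `C` depending only on `Λ` and `λ`. -/
theorem quasicircle_porous_in_ALLC (Λ lam : ℝ) (hΛ : 1 ≤ Λ) (hlam : 1 ≤ lam) :
    ∃ C ≥ (1 : ℝ), ∀ (X : Type) [MetricSpace X], IsALLC X Λ →
      ∀ Γ : Set X, IsJordanCurve Γ → ThreePointCondition Γ lam → IsPorous Γ C := by
  classical
  have hΛ0 : (0:ℝ) < Λ := by linarith
  have hlam0 : (0:ℝ) < lam := by linarith
  have hΛ2 : (1:ℝ) ≤ Λ^2 := by nlinarith
  refine ⟨1000 * Λ^2 * lam, by nlinarith, ?_⟩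
  intro X _ hALLC Γ hJC hTPC
  intro z hzΓ r hr hrdiam
  obtain ⟨F, hFc, hFr, hinj⟩ := hJC.exists_param
  subst hFr
  set C := 1000 * Λ^2 * lam with hCdef
  have hC0 : 0 < C := by positivity
  set ρ := r / C with hρdef
  have hρ0 : 0 < ρ := by positivity
  have hΛne : Λ ≠ 0 := ne_of_gt hΛ0
  have hC1000 : (1000:ℝ) ≤ C := by
    rw [hCdef]
    nlinarith [mul_le_mul_of_nonneg_left hlam (by positivity : (0:ℝ) ≤ 1000*Λ^2)]
  have hρsmall : ρ ≤ r/1000 := by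
    rw [hρdef, div_le_div_iff₀ hC0 (by norm_num)]
    nlinarith [mul_le_mul_of_nonneg_left hC1000 hr.le]
  have hΓcomp : IsCompact (Set.range F) := by
    rw [← param_range_Icc hinj 0]
    exact isCompact_Icc.image hFc
  have hΓbd := hΓcomp.isBounded
  by_cases hdiam : Metric.diam (Set.range F) ≤ r/12
  · -- Case 1 : the curve is small compared to r
    have hfar2 : ∃ u₀ v₀ : X, r/2 < dist u₀ v₀ := by
      by_contra h
      push_neg at h
      have := Metric.diam_le_of_forall_dist_le (s := (Set.univ : Set X)) (by linarith)
        (fun a _ b _ => h a b)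
      linarith
    obtain ⟨u₀, v₀, huv⟩ := hfar2
    obtain ⟨u, hu⟩ : ∃ u, r/4 < dist z u := by
      by_cases h : r/4 < dist z u₀
      · exact ⟨u₀, h⟩
      · refine ⟨v₀, ?_⟩
        push_neg at h
        have := dist_triangle u₀ z v₀
        rw [dist_comm u₀ z] at this
        linarith
    have hzu : z ≠ u := by
      rintro rfl
      rw [dist_self] at hu
      linarith
    -- a third point
    have hπ3 : (6:ℝ) < 2*Real.pi := by nlinarith [Real.pi_gt_three]
    have hFne : ∀ a b : ℝ, a ≠ b → |a - b| < 2*Real.pi → F a ≠ F b := by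
      intro a b hab habs hEq
      obtain ⟨n, hn⟩ := (hinj a b).1 hEq
      exact int_mul_two_pi_abs (x := a - b) (by linarith) habs (sub_ne_zero.2 hab)
    have hF01 : F 0 ≠ F 1 := hFne 0 1 (by norm_num) (by rw [show |(0:ℝ)-1| = 1 by norm_num]; linarith)
    have hF02 : F 0 ≠ F 2 := hFne 0 2 (by norm_num) (by rw [show |(0:ℝ)-2| = 2 by norm_num]; linarith)
    have hF12 : F 1 ≠ F 2 := hFne 1 2 (by norm_num) (by rw [show |(1:ℝ)-2| = 1 by norm_num]; linarith)
    obtain ⟨a₀, _, ha₀z, ha₀u⟩ := exists_third hF01 hF02 hF12 z u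
    set R := dist a₀ z + dist a₀ u + 1 with hRdef
    have hz_ann : z ∈ metricAnnulus a₀ 0 R := by
      simp only [metricAnnulus, Set.mem_setOf_eq]
      constructor
      · exact dist_pos.2 ha₀z
      · have := dist_nonneg (x := a₀) (y := u)
        rw [hRdef]; linarith
    have hu_ann : u ∈ metricAnnulus a₀ 0 R := by
      simp only [metricAnnulus, Set.mem_setOf_eq]
      constructor
      · exact dist_pos.2 ha₀u
      · have := dist_nonneg (x := a₀) (y := z)
        rw [hRdef]; linarith
    have hR0 : (0:ℝ) < R := by
      have h1 := dist_nonneg (x := a₀) (y := z)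
      have h2 := dist_nonneg (x := a₀) (y := u)
      rw [hRdef]; linarith
    obtain ⟨E₀, _, hE₀conn, hzE₀, huE₀, _⟩ := hALLC a₀ 0 R le_rfl hR0 z hz_ann u hu_ann hzu
    obtain ⟨p, hpE₀, hpd⟩ := exists_dist_eq' hE₀conn.isPreconnected hzE₀ huE₀ (c := z)
      (t := r/4) (by rw [dist_self]; positivity) hu.le
    refine ⟨p, ?_⟩
    intro q hq
    have hqp : dist q p < ρ := mem_ball.1 hq
    have hρ12 : ρ ≤ r/12 := by linarith
    constructor
    · rw [mem_ball]
      have h1 := dist_triangle q p z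
      rw [dist_comm p z] at h1
      rw [hpd] at h1
      linarith
    · intro hqΓ
      have h1 : dist z q ≤ r/12 := (Metric.dist_le_diam_of_mem hΓbd hzΓ hqΓ).trans hdiam
      have h2 := dist_triangle z q p
      linarith
  · -- Case 2: the curve is large
    push_neg at hdiam
    obtain ⟨w, hwΓ, hw⟩ : ∃ w ∈ Set.range F, r/24 < dist z w := by
      by_contra h
      push_neg at h
      have : Metric.diam (Set.range F) ≤ r/12 := by
        apply Metric.diam_le_of_forall_dist_le (by positivity)
        intro a ha b hb
        have h1 := h a ha
        have h2 := h b hb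
        have := dist_triangle a z b
        rw [dist_comm a z] at this
        linarith
      linarith
    have hzw : z ≠ w := by
      rintro rfl
      rw [dist_self] at hw
      linarith
    set s := r/(96*Λ) with hsdef
    have hs0 : 0 < s := by rw [hsdef]; positivity
    have hs96 : s ≤ r/96 := by
      rw [hsdef, div_le_div_iff₀ (by positivity) (by norm_num)]
      nlinarith [mul_nonneg hr.le (show (0:ℝ) ≤ 96*Λ - 96 by linarith)]
    have hs48 : Λ*(2*s) = r/48 := by
      have h48 : Λ * (2 * (r/(96*Λ))) * 48 = r * 48 / 48 * (Λ * 96) / (96 * Λ) := by ring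
      rw [hsdef]
      field_simp
      ring
    have hP1 : (3*lam+1)*ρ ≤ s/2/Λ := by
      have h1 : s/2/Λ = r/(192*Λ^2) := by
        rw [hsdef]
        ring
      have h2 : (3*lam+1)*ρ = ((3*lam+1)*r)/C := by rw [hρdef]; ring
      rw [h1, h2, div_le_div_iff₀ hC0 (by positivity), hCdef]
      nlinarith [mul_nonneg (mul_nonneg hr.le (sq_nonneg Λ))
        (show (0:ℝ) ≤ 424*lam - 192 by linarith)]
    have hP2 : (3*lam+1)*ρ ≤ r/48 := by
      have h2 : (3*lam+1)*ρ = ((3*lam+1)*r)/C := by rw [hρdef]; ring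
      rw [h2, div_le_div_iff₀ hC0 (by norm_num), hCdef]
      nlinarith [mul_nonneg hr.le (show (0:ℝ) ≤ 856*lam - 48 by linarith),
        mul_nonneg (mul_nonneg (show (0:ℝ) ≤ Λ^2 - 1 by linarith) hlam0.le) hr.le]
    obtain ⟨U₁, V₁, hU₁conn, hV₁conn, hdisj₁, hunion₁, hclU₁, hclV₁, hzclU₁, hwclU₁,
      hzclV₁, hwclV₁, hcross₁⟩ := key_arcs hFc hinj z hzΓ w hwΓ hzw
    have hU₁sub : U₁ ⊆ Set.range F \ ({z, w} : Set X) := hunion₁ ▸ Set.subset_union_left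
    have hV₁sub : V₁ ⊆ Set.range F \ ({z, w} : Set X) := hunion₁ ▸ Set.subset_union_right
    have hslt : s < dist z w := by linarith
    -- pick x on U₁ and y on V₁ at distance s from z
    have hgetx : ∀ (W : Set X), IsConnected W → closure W ⊆ W ∪ {z, w} →
        z ∈ closure W → w ∈ closure W → ∃ x ∈ W, dist z x = s := by
      intro W hWconn hclW hzW hwW
      obtain ⟨x, hxcl, hxd⟩ := exists_dist_eq' hWconn.isPreconnected.closure hzW hwW
        (c := z) (t := s) (by rw [dist_self]; exact hs0.le) hslt.le
      refine ⟨x, ?_, hxd⟩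
      rcases hclW hxcl with h | h
      · exact h
      · exfalso
        simp only [Set.mem_insert_iff, Set.mem_singleton_iff] at h
        rcases h with rfl | rfl
        · rw [dist_self] at hxd; linarith
        · rw [hxd] at hslt; linarith
    obtain ⟨x, hxU₁, hxd⟩ := hgetx U₁ hU₁conn hclU₁ hzclU₁ hwclU₁
    obtain ⟨y, hyV₁, hyd⟩ := hgetx V₁ hV₁conn hclV₁ hzclV₁ hwclV₁
    have hxy : x ≠ y := by
      rintro rfl
      exact Set.disjoint_left.1 hdisj₁ hxU₁ hyV₁
    have hxΓ : x ∈ Set.range F := (hU₁sub hxU₁).1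
    have hyΓ : y ∈ Set.range F := (hV₁sub hyV₁).1
    have hxann : x ∈ metricAnnulus z (s/2) (2*s) := by
      simp only [metricAnnulus, Set.mem_setOf_eq, hxd]
      constructor <;> linarith
    have hyann : y ∈ metricAnnulus z (s/2) (2*s) := by
      simp only [metricAnnulus, Set.mem_setOf_eq, hyd]
      constructor <;> linarith
    obtain ⟨E, hEcomp, hEconn, hxE, hyE, hEsub⟩ := hALLC z (s/2) (2*s)
      (by positivity) (by linarith) x hxann y hyann hxy
    have hEann : ∀ e ∈ E, s/2/Λ < dist z e ∧ dist z e < Λ*(2*s) := by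
      intro e he
      have := hEsub he
      simpa [metricAnnulus] using this
    have key : ∃ e ∈ E, ∀ γ ∈ Set.range F, ρ ≤ dist e γ := by
      by_contra hcon
      push_neg at hcon
      have htot : ∀ e : X, ∃ γ, γ ∈ Set.range F ∧ (e ∈ E → dist e γ < ρ) ∧
          (e = x → γ = x) ∧ (e = y → γ = y) := by
        intro e
        by_cases h1 : e = x
        · refine ⟨x, hxΓ, ?_, fun _ => rfl, fun h => absurd (h1.symm.trans h) hxy⟩
          intro _
          rw [h1, dist_self]
          exact hρ0
        by_cases h2 : e = y
        · refine ⟨y, hyΓ, ?_, fun h => absurd h h1, fun _ => rfl⟩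
          intro _
          rw [h2, dist_self]
          exact hρ0
        by_cases h3 : e ∈ E
        · obtain ⟨γ, hγ1, hγ2⟩ := hcon e h3
          exact ⟨γ, hγ1, fun _ => hγ2, fun h => absurd h h1, fun h => absurd h h2⟩
        · exact ⟨x, hxΓ, fun h => absurd h h3, fun h => absurd h h1, fun h => absurd h h2⟩
      choose g hgΓ hgd hgx hgy using htot
      have hg : ∀ e ∈ E, g e ∈ Set.range F ∧ dist e (g e) < ρ :=
        fun e he => ⟨hgΓ e, hgd e he⟩
      have h4ρ : 4*ρ ≤ (3*lam+1)*ρ := by nlinarith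
      have hside : ∀ e ∈ E, g e ∈ U₁ ∪ V₁ := by
        intro e he
        obtain ⟨hgΓ, hgd⟩ := hg e he
        obtain ⟨hlow, hhigh⟩ := hEann e he
        rw [hs48] at hhigh
        rw [hunion₁]
        refine ⟨hgΓ, ?_⟩
        simp only [Set.mem_insert_iff, Set.mem_singleton_iff]
        push_neg
        constructor
        · intro hEq
          rw [hEq, dist_comm] at hgd
          linarith
        · intro hEq
          rw [hEq] at hgd
          have h1 := dist_triangle z e w
          linarith
      have hreach := reach_chain hEconn.isPreconnected hxE hyE hρ0
      have hQx : g x ∈ U₁ := by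
        rw [hgx x rfl]
        exact hxU₁
      have hQy : g y ∉ U₁ := by
        rw [hgy y rfl]
        exact fun h => Set.disjoint_left.1 hdisj₁ h hyV₁
      obtain ⟨u', v', ⟨hu'E, hv'E, hu'v'⟩, hQu, hQv⟩ :=
        exists_switch (Q := fun e => g e ∈ U₁) hreach hQx hQy
      set p := g u' with hpdef
      set q := g v' with hqdef
      have hpU₁ : p ∈ U₁ := hQu
      have hqV₁ : q ∈ V₁ := (hside v' hv'E).resolve_left hQv
      have hpΓ : p ∈ Set.range F := (hU₁sub hpU₁).1
      have hqΓ : q ∈ Set.range F := (hV₁sub hqV₁).1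
      have hpq : p ≠ q := by
        rintro h
        exact Set.disjoint_left.1 hdisj₁ hpU₁ (h ▸ hqV₁)
      have hdup : dist u' p < ρ := (hg u' hu'E).2
      have hdvq : dist v' q < ρ := (hg v' hv'E).2
      have hdpq : dist p q < 3*ρ := by
        have h1 := dist_triangle4 p u' v' q
        rw [dist_comm p u'] at h1
        linarith
      obtain ⟨ζ, hζ, hζdiam⟩ := hTPC p hpΓ q hqΓ hpq
      obtain ⟨U', V', hU'conn, hV'conn, hdisj', hunion', hclU', hclV', hpU', hqU',
        hpV', hqV', _⟩ := key_arcs hFc hinj p hpΓ q hqΓ hpq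
      have hU'sub : U' ⊆ Set.range F \ ({p, q} : Set X) := hunion' ▸ Set.subset_union_left
      have hV'sub : V' ⊆ Set.range F \ ({p, q} : Set X) := hunion' ▸ Set.subset_union_right
      have hzpq : z ∈ Set.range F \ ({p, q} : Set X) := by
        refine ⟨hzΓ, ?_⟩
        simp only [Set.mem_insert_iff, Set.mem_singleton_iff]
        push_neg
        have h1 : p ∉ ({z, w} : Set X) := (hU₁sub hpU₁).2
        have h2 : q ∉ ({z, w} : Set X) := (hV₁sub hqV₁).2
        simp only [Set.mem_insert_iff, Set.mem_singleton_iff] at h1 h2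
        push_neg at h1 h2
        exact ⟨Ne.symm h1.1, Ne.symm h2.1⟩
      have hwpq : w ∈ Set.range F \ ({p, q} : Set X) := by
        refine ⟨hwΓ, ?_⟩
        simp only [Set.mem_insert_iff, Set.mem_singleton_iff]
        push_neg
        have h1 : p ∉ ({z, w} : Set X) := (hU₁sub hpU₁).2
        have h2 : q ∉ ({z, w} : Set X) := (hV₁sub hqV₁).2
        simp only [Set.mem_insert_iff, Set.mem_singleton_iff] at h1 h2
        push_neg at h1 h2
        exact ⟨Ne.symm h1.2, Ne.symm h2.2⟩
      have hznotboth : ∀ (W : Set X), IsConnected W → W ⊆ Set.range F \ ({p, q} : Set X) →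
          z ∈ W → w ∈ W → False := by
        intro W hWconn hWsub hzW hwW
        exact hcross₁ p hpU₁ q hqV₁ W hWsub hWconn.isPreconnected hzW hwW
      -- distance bounds for the contradiction
      have hlowu : s/2/Λ < dist z u' := (hEann u' hu'E).1
      have hhighu : dist z u' < r/48 := by
        have := (hEann u' hu'E).2
        rwa [hs48] at this
      have hzplow : 3*lam*ρ < dist p z := by
        have h1 := dist_triangle z p u'
        rw [dist_comm p u'] at h1
        have h2 : dist p z = dist z p := dist_comm p z
        linarith
      have hwplow : 3*lam*ρ < dist p w := by
        have h1 := dist_triangle4 z u' p w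
        linarith
      -- the component J
      set J := connectedComponentIn (Set.range F \ ({p, q} : Set X)) ζ with hJdef
      have hJsub : J ⊆ Set.range F := (connectedComponentIn_subset _ _).trans
        Set.diff_subset
      have hJbd : Bornology.IsBounded J := hΓbd.subset hJsub
      have hdiamJ : ∀ x' ∈ closure J, ∀ y' ∈ closure J, dist x' y' < 3*lam*ρ := by
        intro x' hx' y' hy'
        have h1 := Metric.dist_le_diam_of_mem hJbd.closure hx' hy'
        rw [Metric.diam_closure] at h1
        have h2 : lam * dist p q < lam * (3*ρ) := mul_lt_mul_of_pos_left hdpq hlam0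
        calc dist x' y' ≤ diam J := h1
          _ ≤ lam * dist p q := hζdiam
          _ < lam * (3*ρ) := h2
          _ = 3*lam*ρ := by ring
      have hζUV : ζ ∈ U' ∪ V' := by rw [hunion']; exact hζ
      have hzUV : z ∈ U' ∪ V' := by rw [hunion']; exact hzpq
      have hwUV : w ∈ U' ∪ V' := by rw [hunion']; exact hwpq
      have hfinal : ∀ (W : Set X), IsConnected W → W ⊆ Set.range F \ ({p, q} : Set X) →
          ζ ∈ W → p ∈ closure W → (z ∈ W ∨ w ∈ W) → False := by
        intro W hWconn hWsub hζW hpW hzworW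
        have hWJ : W ⊆ J := hWconn.isPreconnected.subset_connectedComponentIn hζW hWsub
        have hpcl : p ∈ closure J := closure_mono hWJ hpW
        rcases hzworW with hzW | hwW
        · have hcontr := hdiamJ p hpcl z (subset_closure (hWJ hzW))
          linarith
        · have hcontr := hdiamJ p hpcl w (subset_closure (hWJ hwW))
          linarith
      rcases hζUV with hζU' | hζV'
      · rcases hzUV with hzU' | hzV'
        · exact hfinal U' hU'conn hU'sub hζU' hpU' (Or.inl hzU')
        · have hwU' : w ∈ U' := by
            rcases hwUV with h | h
            · exact h
            · exact (hznotboth V' hV'conn hV'sub hzV' h).elim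
          exact hfinal U' hU'conn hU'sub hζU' hpU' (Or.inr hwU')
      · rcases hzUV with hzU' | hzV'
        · have hwV' : w ∈ V' := by
            rcases hwUV with h | h
            · exact (hznotboth U' hU'conn hU'sub hzU' h).elim
            · exact h
          exact hfinal V' hV'conn hV'sub hζV' hpV' (Or.inr hwV')
        · exact hfinal V' hV'conn hV'sub hζV' hpV' (Or.inl hzV')
    obtain ⟨e, heE, hfar⟩ := key
    refine ⟨e, ?_⟩
    intro q' hq'
    have hq'e : dist q' e < ρ := mem_ball.1 hq'
    have hze : dist z e < r/48 := by
      have := (hEann e heE).2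
      rwa [hs48] at this
    constructor
    · rw [mem_ball]
      have h1 := dist_triangle q' e z
      rw [dist_comm e z] at h1
      linarith
    · intro hq'Γ
      have h1 := hfar q' hq'Γ
      rw [dist_comm q' e] at hq'e
      linarith
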